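/- For every integer m ≥ 2 and every nonempty subset S of {1,…,m}, the independence number of the induced subgraph of the pair graph C(C_m) obtained by deleting all 2-multisets containing an element of S is at most ⌊m²/4⌋. -/

import Mathlib

/-- The independence number of a graph: the supremum of sizes of independent sets. -/
noncomputable def indepNum {V : Type*} (G : SimpleGraph V) : ℕ :=
  sSup {n | ∃ s : Finset V, s.card = n ∧ ∀ a ∈ s, ∀ b ∈ s, ¬ G.Adj a b}

/-- The path graph on `n` vertices `0, 1, ..., n-1`. -/
def pathG (n : ℕ) : SimpleGraph (Fin n) :=
  SimpleGraph.fromRel (fun i j => (i : ℕ) + 1 = (j : ℕ))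

/-- The cycle graph on `n` vertices `0, 1, ..., n-1`. -/
def cycleG (n : ℕ) : SimpleGraph (Fin n) :=
  SimpleGraph.fromRel (fun i j => (i : ℕ) + 1 = (j : ℕ) ∨ ((i : ℕ) = 0 ∧ (j : ℕ) = n - 1))

/-- The join of a graph `G` with a single extra vertex. -/
def joinK1 {V : Type*} (G : SimpleGraph V) : SimpleGraph (V ⊕ Unit) :=
  SimpleGraph.fromRel (fun a b =>
    (∃ x y, G.Adj x y ∧ a = Sum.inl x ∧ b = Sum.inl y) ∨ (a.isLeft ∧ b.isRight))

/-- The fan graph `F_{m,1} = P_m + K_1`. -/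
def fanG (m : ℕ) : SimpleGraph (Fin m ⊕ Unit) := joinK1 (pathG m)

/-- The wheel graph `W_{m,1} = C_m + K_1`. -/
def wheelG (m : ℕ) : SimpleGraph (Fin m ⊕ Unit) := joinK1 (cycleG m)

/-- The `k`-token graph: vertices are `k`-subsets of `V(G)`, two subsets adjacent
whenever their symmetric difference is an edge of `G`. -/
def tokenGraph {V : Type*} [DecidableEq V] (k : ℕ) (G : SimpleGraph V) :
    SimpleGraph {A : Finset V // A.card = k} :=
  SimpleGraph.fromRel (fun A B => ∃ a b : V, G.Adj a b ∧ symmDiff A.1 B.1 = {a, b})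

/-- The double vertex graph `G^(2)`: the `2`-token graph of `G`. -/
def doubleVertexGraph {V : Type*} [DecidableEq V] (G : SimpleGraph V) :
    SimpleGraph {A : Finset V // A.card = 2} :=
  tokenGraph 2 G

/-- The pair graph (complete double vertex graph) `C(G)`: vertices are the 2-multisets
of `V(G)`; `{a,x}` and `{a,y}` (distinct) are adjacent iff `x` and `y` are adjacent in `G`. -/
def pairGraph {V : Type*} (G : SimpleGraph V) : SimpleGraph (Sym2 V) :=
  SimpleGraph.fromRel (fun s t => ∃ a x y : V, G.Adj x y ∧ s = s(a, x) ∧ t = s(a, y))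

lemma sum_halves (n : ℕ) :
    4 * (∑ l ∈ Finset.range n, (l / 2 + 1)) + (n + 1) % 2 = (n + 1) * (n + 1) := by
  induction n with
  | zero => simp
  | succ n ih =>
    rw [Finset.sum_range_succ]
    have h2 : (n + 1 + 1) * (n + 1 + 1) = (n + 1) * (n + 1) + 2 * n + 3 := by ring
    omega

lemma card_T (m : ℕ) (hm : 2 ≤ m) :
    ((Finset.Icc 1 (m - 1)).biUnion
      (fun i => (Finset.range ((m - 1 - i) / 2 + 1)).image (fun k => (i, k)))).card
      ≤ m ^ 2 / 4 := by
  rw [Finset.card_biUnion]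
  · have hterm : ∀ i ∈ Finset.Icc 1 (m - 1),
        ((Finset.range ((m - 1 - i) / 2 + 1)).image (fun k => (i, k))).card
          = (m - 1 - i) / 2 + 1 := by
      intro i _
      rw [Finset.card_image_of_injective _ (fun a b h => (Prod.mk.injEq _ _ _ _).mp h |>.2),
        Finset.card_range]
    rw [Finset.sum_congr rfl hterm]
    have hre : ∑ i ∈ Finset.Icc 1 (m - 1), ((m - 1 - i) / 2 + 1)
        = ∑ l ∈ Finset.range (m - 1), (l / 2 + 1) := by
      apply Finset.sum_nbij' (fun i => m - 1 - i) (fun l => m - 1 - l)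
      · intro a ha; simp only [Finset.mem_Icc] at ha; simp only [Finset.mem_range]; omega
      · intro a ha; simp only [Finset.mem_range] at ha; simp only [Finset.mem_Icc]; omega
      · intro a ha; simp only [Finset.mem_Icc] at ha; omega
      · intro a ha; simp only [Finset.mem_range] at ha; omega
      · intro a ha; rfl
    rw [hre]
    have h := sum_halves (m - 1)
    have hm1 : m - 1 + 1 = m := by omega
    rw [hm1] at h
    have hsq : m ^ 2 = m * m := by ring
    omega
  · intro i hi j hj hij
    simp only [Finset.disjoint_left, Finset.mem_image, Finset.mem_range]
    rintro a ⟨k, _, rfl⟩ ⟨k', _, h⟩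
    exact hij ((Prod.mk.injEq _ _ _ _).mp h).1.symm

lemma cycle_adj_succ (m : ℕ) (hm : 2 ≤ m) (x : Fin m) :
    haveI : NeZero m := ⟨by omega⟩
    (cycleG m).Adj x (x + 1) := by
  haveI : NeZero m := ⟨by omega⟩
  have hv1 : (1 : Fin m).val = 1 := by
    rw [Fin.val_one']; exact Nat.mod_eq_of_lt (by omega)
  have hlt := x.isLt
  have hmod : (x.val + 1) % m = if x.val + 1 = m then 0 else x.val + 1 := by
    split
    · next h => rw [h, Nat.mod_self]
    · next h => exact Nat.mod_eq_of_lt (by omega)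
  have hadd : (x + 1 : Fin m).val = (x.val + 1) % m := by
    rw [Fin.val_add, hv1]
  have hne : x ≠ x + 1 := by
    intro h
    have h2 := congrArg Fin.val h
    rw [hadd, hmod] at h2
    split at h2 <;> omega
  rw [cycleG, SimpleGraph.fromRel_adj]
  refine ⟨hne, ?_⟩
  by_cases h : x.val + 1 < m
  · left; left; rw [hadd, hmod]; split <;> omega
  · right; right
    constructor
    · rw [hadd, hmod]; split <;> omega
    · omega

/-- For `m ≥ 2` and every nonempty `S ⊆ {1,…,m}`, the induced subgraph of the pair graph
`C(C_m)` obtained by deleting all 2-multisets containing an element of `S` has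
independence number at most `⌊m²/4⌋`. -/
theorem indepNum_pairGraph_cycle_delete (m : ℕ) (hm : 2 ≤ m) (S : Finset (Fin m))
    (hS : S.Nonempty) :
    indepNum (SimpleGraph.induce {s : Sym2 (Fin m) | ∀ i ∈ S, i ∉ s}
      (pairGraph (cycleG m))) ≤ m ^ 2 / 4 := by
  obtain ⟨q, hqS⟩ := hS
  haveI : NeZero m := ⟨by omega⟩
  rw [indepNum]
  refine csSup_le ⟨0, ∅, by simp⟩ ?_
  rintro n ⟨t, rfl, ht⟩
  -- position function along the path obtained by deleting q
  set p : Fin m → ℕ := fun x => ((x - q : Fin m) : ℕ) with hpdef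
  have hp_lt : ∀ x, p x < m := fun x => (x - q).isLt
  have hp_inj : Function.Injective p := by
    intro x y h
    have h2 : x - q = y - q := Fin.val_injective h
    exact sub_left_injective h2
  have hp_one : ∀ x : Fin m, x ≠ q → 1 ≤ p x := by
    intro x hx
    refine Nat.one_le_iff_ne_zero.mpr (fun h0 => hx ?_)
    have : x - q = 0 := Fin.val_injective (by show p x = _; rw [h0]; simp)
    exact sub_eq_zero.mp this
  have hv1 : (1 : Fin m).val = 1 := by
    rw [Fin.val_one']; exact Nat.mod_eq_of_lt (by omega)
  have hsucc : ∀ y z : Fin m, p z = p y + 1 → z = y + 1 := by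
    intro y z h
    have hlt : p y + 1 < m := h ▸ hp_lt z
    have h1 : ((y - q) + 1 : Fin m).val = p y + 1 := by
      rw [Fin.val_add, hv1]
      exact Nat.mod_eq_of_lt hlt
    have h2 : z - q = (y - q) + 1 := Fin.val_injective (h.trans h1.symm)
    have h3 : z = (y - q) + 1 + q := sub_eq_iff_eq_add.mp h2
    rw [h3]; abel
  -- ordered representation of a 2-multiset
  have hrep : ∀ z : Sym2 (Fin m), ∃ a b, z = s(a, b) ∧ p a ≤ p b := by
    intro z
    induction z using Sym2.ind with
    | _ a b =>
      rcases le_total (p a) (p b) with h | h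
      · exact ⟨a, b, rfl, h⟩
      · exact ⟨b, a, Sym2.eq_swap, h⟩
  set F : Sym2 (Fin m) → ℕ × ℕ :=
    Sym2.lift ⟨fun a b => (min (p a) (p b), max (p a) (p b)),
      fun a b => by simp [min_comm, max_comm]⟩ with hFdef
  have hFval : ∀ a b : Fin m, p a ≤ p b → F s(a, b) = (p a, p b) := by
    intro a b h
    rw [hFdef, Sym2.lift_mk]
    simp [min_eq_left h, max_eq_right h]
  set f : {s : Sym2 (Fin m) | ∀ i ∈ S, i ∉ s} → ℕ × ℕ :=
    fun u => ((F u.val).1, ((F u.val).2 - (F u.val).1) / 2) with hfdef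
  -- the contradiction from two "consecutive" independent vertices
  have core : ∀ u ∈ t, ∀ v ∈ t, ∀ a b d : Fin m,
      u.val = s(a, b) → v.val = s(a, d) → p d = p b + 1 → False := by
    intro u hu v hv a b d hu1 hv1 hpd
    have hbd : b ≠ d := by intro h; rw [h] at hpd; omega
    have hd : d = b + 1 := hsucc b d hpd
    have hne : u.val ≠ v.val := by
      rw [hu1, hv1]
      intro h
      exact hbd (Sym2.congr_right.mp h)
    have hadjc : (cycleG m).Adj b d := by rw [hd]; exact cycle_adj_succ m hm b
    have hadjp : (pairGraph (cycleG m)).Adj u.val v.val := by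
      rw [pairGraph, SimpleGraph.fromRel_adj]
      exact ⟨hne, Or.inl ⟨a, b, d, hadjc, hu1, hv1⟩⟩
    exact ht u hu v hv hadjp
  have hnotq : ∀ (u : {s : Sym2 (Fin m) | ∀ i ∈ S, i ∉ s}) (a b : Fin m),
      u.val = s(a, b) → a ≠ q ∧ b ≠ q := by
    intro u a b hab
    have hq := u.2 q hqS
    rw [hab] at hq
    constructor
    · intro h; exact hq (Sym2.mem_iff.mpr (Or.inl h.symm))
    · intro h; exact hq (Sym2.mem_iff.mpr (Or.inr h.symm))
  calc t.card
      ≤ ((Finset.Icc 1 (m - 1)).biUnion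
          (fun i => (Finset.range ((m - 1 - i) / 2 + 1)).image (fun k => (i, k)))).card := by
        apply Finset.card_le_card_of_injOn f
        · intro u hu
          obtain ⟨a, b, hab, hle⟩ := hrep u.val
          have hFu : F u.val = (p a, p b) := by rw [hab]; exact hFval a b hle
          have hfu : f u = (p a, (p b - p a) / 2) := by rw [hfdef]; simp [hFu]
          obtain ⟨haq, hbq⟩ := hnotq u a b hab
          rw [hfu]
          refine Finset.mem_biUnion.mpr ⟨p a, Finset.mem_Icc.mpr ⟨hp_one a haq, ?_⟩,
            Finset.mem_image.mpr ⟨(p b - p a) / 2, Finset.mem_range.mpr ?_, rfl⟩⟩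
          · have := hp_lt a; omega
          · have := hp_lt b; omega
        · intro u hu v hv heq
          obtain ⟨a, b, hab, hleab⟩ := hrep u.val
          obtain ⟨c, d, hcd, hlecd⟩ := hrep v.val
          have hFu : F u.val = (p a, p b) := by rw [hab]; exact hFval a b hleab
          have hFv : F v.val = (p c, p d) := by rw [hcd]; exact hFval c d hlecd
          have heq2 : (p a, (p b - p a) / 2) = (p c, (p d - p c) / 2) := by
            rw [hfdef] at heq; simp [hFu, hFv] at heq
            exact Prod.ext heq.1 heq.2
          have h1 : p a = p c := ((Prod.mk.injEq _ _ _ _).mp heq2).1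
          have h2 : (p b - p a) / 2 = (p d - p c) / 2 := ((Prod.mk.injEq _ _ _ _).mp heq2).2
          have hac : a = c := hp_inj h1
          rcases lt_trichotomy (p b) (p d) with h | h | h
          · exact (core u (Finset.mem_coe.mp hu) v (Finset.mem_coe.mp hv) a b d hab
              (by rw [hcd, hac]) (by omega)).elim
          · have hbd : b = d := hp_inj h
            exact Subtype.ext (hab.trans (by rw [hac, hbd, hcd]))
          · exact (core v (Finset.mem_coe.mp hv) u (Finset.mem_coe.mp hu) c d b hcd
              (by rw [hab, hac]) (by omega)).elim
    _ ≤ m ^ 2 / 4 := card_T m hm
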